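/- Every integer point of the polytope P'_Γ = {x ∈ ℝⁿ : ⟨1_γ, x⟩ ≥ ℓ_γ for all subgraphs γ, ⟨1_Γ, x⟩ ≤ ℓ_Γ + 1} is either the incidence vector of the complement of a spanning tree of Γ, or such an incidence vector plus a standard basis vector e_i. -/

import Mathlib

open scoped Classical

/-- A finite multigraph on vertex type `V` with edge type `E` is given by an
endpoint map `G : E → Sym2 V`. -/
structure Subgraph {V E : Type} [Fintype V] [Fintype E] [DecidableEq V] [DecidableEq E]
    (G : E → Sym2 V) where
  verts : Finset V
  edges : Finset E
  incl : ∀ e ∈ edges, ∀ v ∈ G e, v ∈ verts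

variable {V E : Type} [Fintype V] [Fintype E] [DecidableEq V] [DecidableEq E]

/-- Number of connected components of a subgraph. -/
noncomputable def comps (G : E → Sym2 V) (H : Subgraph G) : ℕ :=
  Nat.card (Quot fun a b : {v : V // v ∈ H.verts} => ∃ e ∈ H.edges, G e = s(a.1, b.1))

/-- Cycle rank (first Betti number) `ℓ(H) = |E(H)| - |V(H)| + c(H)`. -/
noncomputable def cycleRank (G : E → Sym2 V) (H : Subgraph G) : ℤ :=
  (H.edges.card : ℤ) - (H.verts.card : ℤ) + (comps G H : ℤ)

/-- The spanning subgraph with all vertices and edge set `S`. -/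
def spanningSub (G : E → Sym2 V) (S : Finset E) : Subgraph G where
  verts := Finset.univ
  edges := S
  incl := fun _ _ v _ => Finset.mem_univ v

/-- `T` is (the edge set of) a spanning tree of `G`. -/
noncomputable def IsSpanningTree (G : E → Sym2 V) (T : Finset E) : Prop :=
  T.card + 1 = Fintype.card V ∧ comps G (spanningSub G T) = 1

/-- The graph `G` is connected. -/
noncomputable def GraphConnected (G : E → Sym2 V) : Prop :=
  comps G (spanningSub G Finset.univ) = 1

/-- Real incidence vector of a set of edges. -/
def ind (S : Finset E) : E → ℝ := fun e => if e ∈ S then 1 else 0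

/-- Integer incidence vector of a set of edges. -/
def indZ (S : Finset E) : E → ℤ := fun e => if e ∈ S then 1 else 0

/-! ### Auxiliary development -/

namespace IPPAux

variable (G : E → Sym2 V)

/-- The adjacency relation of the spanning subgraph with edge set `A`. -/
def rel (A : Finset E) :
    {v : V // v ∈ (Finset.univ : Finset V)} → {v : V // v ∈ (Finset.univ : Finset V)} → Prop :=
  fun a b => ∃ e ∈ A, G e = s(a.1, b.1)

/-- Number of components of the spanning subgraph with edge set `A`. -/
noncomputable def cc (A : Finset E) : ℕ := comps G (spanningSub G A)

lemma cc_def (A : Finset E) : cc G A = Nat.card (Quot (rel G A)) := rfl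

lemma rel_mono {A B : Finset E} (h : A ⊆ B) {a b} (hab : rel G A a b) : rel G B a b := by
  obtain ⟨e, he, hGe⟩ := hab; exact ⟨e, h he, hGe⟩

lemma cc_mono {A B : Finset E} (h : A ⊆ B) : cc G B ≤ cc G A := by
  rw [cc_def, cc_def]
  refine Nat.card_le_card_of_surjective
    (Quot.map id (fun a b hab => rel_mono G h hab)) ?_
  intro q
  obtain ⟨a, rfl⟩ := Quot.exists_rep q
  exact ⟨Quot.mk _ a, rfl⟩

lemma cc_pos [Nonempty V] (A : Finset E) : 1 ≤ cc G A := by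
  rw [cc_def]
  have : Nonempty (Quot (rel G A)) :=
    ⟨Quot.mk _ ⟨Classical.arbitrary V, Finset.mem_univ _⟩⟩
  exact Nat.card_pos

lemma cc_empty : cc G (∅ : Finset E) = Fintype.card V := by
  rw [cc_def]
  have key : ∀ a b, Relation.EqvGen (rel G (∅ : Finset E)) a b → a = b := by
    intro a b h
    induction h with
    | rel a b h => obtain ⟨e, he, _⟩ := h; exact absurd he (Finset.notMem_empty e)
    | refl => rfl
    | symm a b _ ih => exact ih.symm
    | trans a b c _ _ ih1 ih2 => exact ih1.trans ih2
  have hbij : Function.Bijective (Quot.mk (rel G (∅ : Finset E))) := by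
    constructor
    · intro a b hab
      exact key a b (Quot.eqvGen_exact hab)
    · intro q
      obtain ⟨a, rfl⟩ := Quot.exists_rep q
      exact ⟨a, rfl⟩
  rw [← Nat.card_eq_of_bijective _ hbij, Nat.card_eq_fintype_card, Fintype.card_coe,
    Finset.card_univ]

lemma exists_endpoints (e : E) : ∃ v w : {v : V // v ∈ (Finset.univ : Finset V)},
    G e = s(v.1, w.1) := by
  have key : ∀ z : Sym2 V,
      ∃ v w : {v : V // v ∈ (Finset.univ : Finset V)}, z = s(v.1, w.1) :=
    Sym2.ind fun x y => ⟨⟨x, Finset.mem_univ _⟩, ⟨y, Finset.mem_univ _⟩, rfl⟩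
  exact key (G e)

/-- Description of the equivalence generated after inserting one edge. -/
lemma eqvGen_insert {A : Finset E} {e : E} {v w : {v : V // v ∈ (Finset.univ : Finset V)}}
    (hvw : G e = s(v.1, w.1)) {a b : {v : V // v ∈ (Finset.univ : Finset V)}} :
    Relation.EqvGen (rel G (insert e A)) a b ↔
      Relation.EqvGen (rel G A) a b ∨
      (Relation.EqvGen (rel G A) a v ∧ Relation.EqvGen (rel G A) w b) ∨
      (Relation.EqvGen (rel G A) a w ∧ Relation.EqvGen (rel G A) v b) := by
  have hE : Equivalence (Relation.EqvGen (rel G A)) := Relation.EqvGen.is_equivalence _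
  constructor
  · intro h
    induction h with
    | rel a b hab =>
      obtain ⟨f, hf, hGf⟩ := hab
      rcases Finset.mem_insert.mp hf with rfl | hfA
      · rw [hvw] at hGf
        rcases Sym2.eq_iff.mp hGf with ⟨h1, h2⟩ | ⟨h1, h2⟩
        · refine Or.inr (Or.inl ⟨?_, ?_⟩)
          · rw [show a = v from Subtype.ext h1.symm]; exact hE.refl v
          · rw [show b = w from Subtype.ext h2.symm]; exact hE.refl w
        · refine Or.inr (Or.inr ⟨?_, ?_⟩)
          · rw [show a = w from Subtype.ext h2.symm]; exact hE.refl w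
          · rw [show b = v from Subtype.ext h1.symm]; exact hE.refl v
      · exact Or.inl (Relation.EqvGen.rel _ _ ⟨f, hfA, hGf⟩)
    | refl a => exact Or.inl (hE.refl a)
    | symm a b _ ih =>
      rcases ih with h | ⟨h1, h2⟩ | ⟨h1, h2⟩
      · exact Or.inl (hE.symm h)
      · exact Or.inr (Or.inr ⟨hE.symm h2, hE.symm h1⟩)
      · exact Or.inr (Or.inl ⟨hE.symm h2, hE.symm h1⟩)
    | trans a b c _ _ ih1 ih2 =>
      rcases ih1 with h | ⟨h1, h2⟩ | ⟨h1, h2⟩ <;>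
        rcases ih2 with h' | ⟨h1', h2'⟩ | ⟨h1', h2'⟩
      · exact Or.inl (hE.trans h h')
      · exact Or.inr (Or.inl ⟨hE.trans h h1', h2'⟩)
      · exact Or.inr (Or.inr ⟨hE.trans h h1', h2'⟩)
      · exact Or.inr (Or.inl ⟨h1, hE.trans h2 h'⟩)
      · exact Or.inl (hE.trans h1 (hE.trans (hE.symm (hE.trans h2 h1')) h2'))
      · exact Or.inl (hE.trans h1 h2')
      · exact Or.inr (Or.inr ⟨h1, hE.trans h2 h'⟩)
      · exact Or.inl (hE.trans h1 h2')
      · exact Or.inl (hE.trans h1 (hE.trans (hE.symm (hE.trans h2 h1')) h2'))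
  · have hmono : ∀ {a b}, Relation.EqvGen (rel G A) a b →
        Relation.EqvGen (rel G (insert e A)) a b :=
      fun h => Relation.EqvGen.mono (fun a b => rel_mono G (Finset.subset_insert e A)) _ _ h
    have hvw' : Relation.EqvGen (rel G (insert e A)) v w :=
      Relation.EqvGen.rel _ _ ⟨e, Finset.mem_insert_self e A, hvw⟩
    rintro (h | ⟨h1, h2⟩ | ⟨h1, h2⟩)
    · exact hmono h
    · exact Relation.EqvGen.trans _ _ _ (hmono h1)
        (Relation.EqvGen.trans _ _ _ hvw' (hmono h2))
    · exact Relation.EqvGen.trans _ _ _ (hmono h1)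
        (Relation.EqvGen.trans _ _ _ (Relation.EqvGen.symm _ _ hvw') (hmono h2))

/-- Adding an edge decreases the number of components by at most one. -/
lemma cc_le_cc_insert_add_one (A : Finset E) (e : E) :
    cc G A ≤ cc G (insert e A) + 1 := by
  obtain ⟨v, w, hvw⟩ := exists_endpoints G e
  set g : Quot (rel G A) → Quot (rel G (insert e A)) :=
    Quot.map id (fun a b hab => rel_mono G (Finset.subset_insert e A) hab) with hg
  set h : Quot (rel G A) → Quot (rel G (insert e A)) ⊕ Unit :=
    fun q => if q = Quot.mk _ w then Sum.inr () else Sum.inl (g q) with hh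
  have hinj : Function.Injective h := by
    intro q1 q2 heq
    rcases eq_or_ne q1 (Quot.mk _ w) with h1 | h1 <;>
      rcases eq_or_ne q2 (Quot.mk _ w) with h2 | h2
    · rw [h1, h2]
    · simp only [hh] at heq; rw [if_pos h1, if_neg h2] at heq; exact absurd heq (by simp)
    · simp only [hh] at heq; rw [if_neg h1, if_pos h2] at heq; exact absurd heq (by simp)
    · simp only [hh] at heq; rw [if_neg h1, if_neg h2, Sum.inl.injEq] at heq
      obtain ⟨a, rfl⟩ := Quot.exists_rep q1
      obtain ⟨b, rfl⟩ := Quot.exists_rep q2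
      have heq' : Quot.mk (rel G (insert e A)) a = Quot.mk (rel G (insert e A)) b := heq
      have hgen := Quot.eqvGen_exact heq'
      rcases (eqvGen_insert G hvw).mp hgen with hcase | ⟨hc1, hc2⟩ | ⟨hc1, hc2⟩
      · exact Quot.eqvGen_sound hcase
      · exact absurd (Quot.eqvGen_sound ((Relation.EqvGen.is_equivalence _).symm hc2))
          h2
      · exact absurd (Quot.eqvGen_sound hc1) h1
  calc cc G A ≤ Nat.card (Quot (rel G (insert e A)) ⊕ Unit) :=
        Nat.card_le_card_of_injective h hinj
    _ = Nat.card (Quot (rel G (insert e A))) + Nat.card Unit := Nat.card_sum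
    _ = cc G (insert e A) + 1 := by rw [cc_def]; simp

/-- If the endpoints of `e` are already connected, inserting `e` does not
decrease the number of components. -/
lemma cc_le_cc_insert (A : Finset E) (e : E)
    {v w : {v : V // v ∈ (Finset.univ : Finset V)}} (hvw : G e = s(v.1, w.1))
    (hcon : Relation.EqvGen (rel G A) v w) :
    cc G A ≤ cc G (insert e A) := by
  have hE : Equivalence (Relation.EqvGen (rel G A)) := Relation.EqvGen.is_equivalence _
  refine Nat.card_le_card_of_injective
    (Quot.map id (fun a b hab => rel_mono G (Finset.subset_insert e A) hab)) ?_
  intro q1 q2 heq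
  refine Quot.induction_on₂ q1 q2 (fun a b heq => ?_) heq
  simp only [Quot.map, id] at heq
  have := Quot.eqvGen_exact heq
  rcases (eqvGen_insert G hvw).mp this with hcase | ⟨hc1, hc2⟩ | ⟨hc1, hc2⟩
  · exact Quot.eqvGen_sound hcase
  · exact Quot.eqvGen_sound (hE.trans hc1 (hE.trans hcon hc2))
  · exact Quot.eqvGen_sound (hE.trans hc1 (hE.trans (hE.symm hcon) hc2))

/-- If the endpoints of `e` are not connected, inserting `e` strictly decreases
the number of components. -/
lemma cc_insert_lt (A : Finset E) (e : E)
    {v w : {v : V // v ∈ (Finset.univ : Finset V)}} (hvw : G e = s(v.1, w.1))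
    (hcon : ¬ Relation.EqvGen (rel G A) v w) :
    cc G (insert e A) < cc G A := by
  refine lt_of_le_of_ne (cc_mono G (Finset.subset_insert e A)) ?_
  intro hEq
  set g : Quot (rel G A) → Quot (rel G (insert e A)) :=
    Quot.map id (fun a b hab => rel_mono G (Finset.subset_insert e A) hab) with hg
  have hsurj : Function.Surjective g := by
    intro q
    obtain ⟨a, rfl⟩ := Quot.exists_rep q
    exact ⟨Quot.mk _ a, rfl⟩
  have hbij : Function.Bijective g :=
    (Nat.bijective_iff_surjective_and_card g).mpr ⟨hsurj, by
      rw [cc_def, cc_def] at hEq; exact hEq.symm⟩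
  have : g (Quot.mk _ v) = g (Quot.mk _ w) := by
    simp only [hg, Quot.map, id]
    exact Quot.eqvGen_sound (Relation.EqvGen.rel _ _ ⟨e, Finset.mem_insert_self e A, hvw⟩)
  have := hbij.injective this
  exact hcon (Quot.eqvGen_exact this)

/-- Diminishing marginals for the number of components. -/
lemma cc_dr {C D : Finset E} (hCD : C ⊆ D) (e : E) :
    cc G D + cc G (insert e C) ≤ cc G C + cc G (insert e D) := by
  obtain ⟨v, w, hvw⟩ := exists_endpoints G e
  by_cases h : Relation.EqvGen (rel G C) v w
  · have hD : Relation.EqvGen (rel G D) v w :=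
      Relation.EqvGen.mono (fun a b => rel_mono G hCD) _ _ h
    have h1 : cc G (insert e C) ≤ cc G C := cc_mono G (Finset.subset_insert e C)
    have h2 : cc G D ≤ cc G (insert e D) := cc_le_cc_insert G D e hvw hD
    omega
  · have h1 : cc G (insert e C) < cc G C := cc_insert_lt G C e hvw h
    have h2 : cc G D ≤ cc G (insert e D) + 1 := cc_le_cc_insert_add_one G D e
    omega

/-- Supermodularity of the number of components. -/
lemma cc_supermod (A B : Finset E) :
    cc G A + cc G B ≤ cc G (A ∪ B) + cc G (A ∩ B) := by
  generalize hn : (B \ A).card = n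
  induction n generalizing B with
  | zero =>
    have hBA : B ⊆ A := by
      intro b hb
      by_contra hbA
      have : b ∈ B \ A := Finset.mem_sdiff.mpr ⟨hb, hbA⟩
      have := Finset.card_pos.mpr ⟨b, this⟩
      omega
    rw [Finset.union_eq_left.mpr hBA, Finset.inter_eq_right.mpr hBA]
  | succ n ih =>
    have hne : (B \ A).Nonempty := Finset.card_pos.mp (by omega)
    obtain ⟨e, he⟩ := hne
    obtain ⟨heB, heA⟩ := Finset.mem_sdiff.mp he
    set B' := B.erase e with hB'
    have hB'card : (B' \ A).card = n := by
      have : B' \ A = (B \ A).erase e := by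
        ext f; simp [hB', Finset.mem_erase, Finset.mem_sdiff, and_assoc, and_left_comm]
      rw [this, Finset.card_erase_of_mem he, hn]
      omega
    have hBeq : B = insert e B' := by
      rw [hB', Finset.insert_erase heB]
    have hU : A ∪ B = insert e (A ∪ B') := by
      rw [hBeq, Finset.union_insert]
    have hI : A ∩ B = A ∩ B' := by
      ext f
      simp only [Finset.mem_inter, hBeq, Finset.mem_insert]
      constructor
      · rintro ⟨hfA, rfl | hf⟩
        · exact absurd hfA heA
        · exact ⟨hfA, hf⟩
      · rintro ⟨hfA, hf⟩; exact ⟨hfA, Or.inr hf⟩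
    have h1 := ih B' hB'card
    have h2 := cc_dr G (Finset.subset_union_right (s₁ := A) (s₂ := B')) e
    rw [hU, hI, hBeq]
    omega

/-- Each edge decreases the component count by at most one below `|V|`. -/
lemma card_le_cc_add_card (A : Finset E) :
    Fintype.card V ≤ cc G A + A.card := by
  induction A using Finset.induction with
  | empty => simp [cc_empty]
  | insert _ _ hnotmem =>
    rename_i e A ih
    have h1 := cc_le_cc_insert_add_one G A e
    have h2 := Finset.card_insert_of_notMem hnotmem
    omega

/-- Weak monotonicity: `cc A ≤ cc (A ∪ B) + |B|`. -/
lemma cc_le_cc_union_add (A B : Finset E) :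
    cc G A ≤ cc G (A ∪ B) + B.card := by
  induction B using Finset.induction with
  | empty => simp
  | insert _ _ hnotmem =>
    rename_i f B ih
    have h1 : A ∪ insert f B = insert f (A ∪ B) := by
      ext g; simp [Finset.mem_insert, Finset.mem_union, or_left_comm, or_assoc]
    have h2 := cc_le_cc_insert_add_one G (A ∪ B) f
    have h3 := Finset.card_insert_of_notMem hnotmem
    rw [h1]
    omega

/-- The cycle rank of the spanning subgraph with edge set `A`. -/
noncomputable def l (A : Finset E) : ℤ :=
  (A.card : ℤ) - (Fintype.card V : ℤ) + (cc G A : ℤ)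

lemma cycleRank_spanning (A : Finset E) :
    cycleRank G (spanningSub G A) = l G A := by
  unfold cycleRank l spanningSub
  rw [Finset.card_univ]
  rfl

lemma l_mono {A B : Finset E} (h : A ⊆ B) : l G A ≤ l G B := by
  have h1 : cc G A ≤ cc G (A ∪ (B \ A)) + (B \ A).card := cc_le_cc_union_add G A (B \ A)
  rw [Finset.union_sdiff_of_subset h] at h1
  have h2 : (B \ A).card = B.card - A.card := Finset.card_sdiff_of_subset h
  have h3 : A.card ≤ B.card := Finset.card_le_card h
  unfold l
  omega

lemma l_supermod (A B : Finset E) : l G A + l G B ≤ l G (A ∪ B) + l G (A ∩ B) := by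
  have h1 := cc_supermod G A B
  have h2 : (A ∪ B).card + (A ∩ B).card = A.card + B.card :=
    Finset.card_union_add_card_inter A B
  unfold l
  omega

lemma l_nonneg (A : Finset E) : 0 ≤ l G A := by
  have := card_le_cc_add_card G A
  unfold l
  omega

lemma nonempty_of_connected (hconn : GraphConnected G) : Nonempty V := by
  by_contra h
  rw [not_nonempty_iff] at h
  have : IsEmpty {v : V // v ∈ (Finset.univ : Finset V)} := by
    exact ⟨fun v => IsEmpty.false v.1⟩
  have hE : IsEmpty (Quot (rel G (Finset.univ : Finset E))) :=
    ⟨fun q => by obtain ⟨a, _⟩ := Quot.exists_rep q; exact IsEmpty.false a⟩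
  have : cc G (Finset.univ : Finset E) = 0 := by
    rw [cc_def]; exact Nat.card_of_isEmpty
  have hc : cc G (Finset.univ : Finset E) = 1 := hconn
  omega

lemma cc_univ (hconn : GraphConnected G) : cc G (Finset.univ : Finset E) = 1 := hconn

/-- Main lemma for the tight case: if all spanning constraints hold and the total
sum equals the cycle rank of the whole graph, then `x` is the indicator of the
complement of a spanning tree. -/
lemma case_tight (hconn : GraphConnected G) (x : E → ℤ)
    (h : ∀ A : Finset E, l G A ≤ ∑ e ∈ A, x e)
    (hsum : ∑ e, x e = l G Finset.univ) :
    ∃ T, IsSpanningTree G T ∧ x = indZ Tᶜ := by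
  have hV : Nonempty V := nonempty_of_connected G hconn
  set N := Fintype.card V with hN
  set n := Fintype.card E with hn
  have hl_univ : l G (Finset.univ : Finset E) = (n : ℤ) - N + 1 := by
    unfold l
    rw [cc_univ G hconn, Finset.card_univ]
    push_cast
    ring
  -- nonnegativity
  have hx0 : ∀ e, 0 ≤ x e := by
    intro e
    have h1 := h {e}
    have h2 := card_le_cc_add_card G {e}
    unfold l at h1
    simp only [Finset.sum_singleton, Finset.card_singleton] at h1 h2
    omega
  -- x e ≤ 1
  have hx1 : ∀ e, x e ≤ 1 := by
    intro e
    have h1 := h (Finset.univ.erase e)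
    have hcard : (Finset.univ.erase e).card = n - 1 :=
      by rw [Finset.card_erase_of_mem (Finset.mem_univ e), Finset.card_univ]
    have hpos : 1 ≤ cc G (Finset.univ.erase e) := cc_pos G _
    have hsum2 : ∑ f ∈ Finset.univ.erase e, x f + x e = ∑ f, x f :=
      Finset.sum_erase_add _ _ (Finset.mem_univ e)
    have hn1 : 1 ≤ n := by
      have : e ∈ (Finset.univ : Finset E) := Finset.mem_univ e
      have := Finset.card_pos.mpr ⟨e, this⟩
      rw [Finset.card_univ] at this
      omega
    unfold l at h1
    rw [hcard] at h1
    rw [hsum, hl_univ] at hsum2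
    push_cast [Nat.cast_sub hn1] at h1
    omega
  -- the support
  set S := Finset.univ.filter (fun e => x e = 1) with hS
  have hxS : x = indZ S := by
    funext e
    by_cases he : x e = 1
    · simp [indZ, hS, he]
    · have h0 := hx0 e
      have h1 := hx1 e
      have : x e = 0 := by omega
      simp [indZ, hS, he, this]
  have hsum_S : ∑ e, x e = (S.card : ℤ) := by
    rw [hxS]
    unfold indZ
    rw [Finset.sum_ite_mem, Finset.univ_inter, Finset.sum_const, nsmul_eq_mul, mul_one]
  set T := Sᶜ with hT
  have hST : S.card + T.card = n := by
    rw [hT]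
    have h1 := Finset.card_compl (α := E) S
    have hle := Finset.card_le_univ S
    omega
  have hScard : (S.card : ℤ) = (n : ℤ) - N + 1 := by rw [← hsum_S, hsum, hl_univ]
  have hTcard : (T.card : ℤ) = (N : ℤ) - 1 := by
    have : (S.card : ℤ) + T.card = n := by exact_mod_cast hST
    omega
  -- T is connected
  have hxT : ∑ e ∈ T, x e = 0 := by
    refine Finset.sum_eq_zero fun e he => ?_
    rw [hxS]
    unfold indZ
    rw [if_neg]
    rw [hT] at he
    exact fun hc => (Finset.mem_compl.mp he) hc
  have hccT : cc G T = 1 := by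
    have h1 := h T
    rw [hxT] at h1
    unfold l at h1
    have h2 : 1 ≤ cc G T := cc_pos G _
    omega
  refine ⟨T, ⟨?_, hccT⟩, ?_⟩
  · have hN1 : 1 ≤ N := Fintype.card_pos
    omega
  · rw [hT, compl_compl, hxS]

end IPPAux

/-- Every integer point of the polytope `P'_Γ` is the incidence vector of the
complement of a spanning tree, or such an incidence vector plus a standard basis
vector. -/
theorem integer_points_of_polytope (G : E → Sym2 V) (hconn : GraphConnected G)
    (x : E → ℤ)
    (hx : (∀ γ : Subgraph G, (cycleRank G γ : ℝ) ≤ ∑ e ∈ γ.edges, (x e : ℝ)) ∧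
      ∑ e, (x e : ℝ) ≤ (cycleRank G (spanningSub G Finset.univ) : ℝ) + 1) :
    (∃ T, IsSpanningTree G T ∧ x = indZ Tᶜ) ∨
    (∃ T, ∃ i : E, IsSpanningTree G T ∧ x = indZ Tᶜ + Pi.single i 1) := by
  classical
  open IPPAux in
  -- translate the hypotheses into integer form
  have h1 : ∀ γ : Subgraph G, cycleRank G γ ≤ ∑ e ∈ γ.edges, x e := by
    intro γ
    have := hx.1 γ
    exact_mod_cast this
  have h2 : ∑ e, x e ≤ cycleRank G (spanningSub G Finset.univ) + 1 := by
    have := hx.2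
    exact_mod_cast this
  have hA : ∀ A : Finset E, l G A ≤ ∑ e ∈ A, x e := by
    intro A
    have := h1 (spanningSub G A)
    rwa [cycleRank_spanning] at this
  rw [cycleRank_spanning] at h2
  have hbase : l G Finset.univ ≤ ∑ e, x e := hA Finset.univ
  by_cases hcase : ∑ e, x e = l G Finset.univ
  · exact Or.inl (case_tight G hconn x hA hcase)
  · -- the sum equals ℓ(Γ) + 1
    have hsum1 : ∑ e, x e = l G Finset.univ + 1 := by omega
    -- tight sets
    set Tight : Finset E → Prop := fun A => ∑ e ∈ A, x e ≤ l G A with hTight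
    have tight_empty : Tight ∅ := by
      simp only [hTight, Finset.sum_empty]
      have h1 := l_nonneg G (∅ : Finset E)
      omega
    have tight_union : ∀ A, Tight A → ∀ B, Tight B → Tight (A ⊔ B) := by
      intro A hA' B hB'
      simp only [hTight] at hA' hB' ⊢
      have hsupermod := l_supermod G A B
      have hsum_ui : ∑ e ∈ A ∪ B, x e + ∑ e ∈ A ∩ B, x e = ∑ e ∈ A, x e + ∑ e ∈ B, x e :=
        Finset.sum_union_inter
      have hint := hA (A ∩ B)
      have : Tight (A ∪ B) := by
        simp only [hTight]
        omega
      exact this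
    set 𝒯 := Finset.univ.filter Tight with h𝒯
    set U := 𝒯.sup id with hU
    have tightU : Tight U := by
      refine Finset.sup_induction tight_empty tight_union ?_
      intro B hB
      exact (Finset.mem_filter.mp hB).2
    have hUsub : U ⊆ Finset.univ := Finset.subset_univ U
    have hlU : l G U ≤ l G Finset.univ := l_mono G hUsub
    have hUx : ∑ e ∈ U, x e ≤ l G Finset.univ := le_trans tightU hlU
    have hsdiff : ∑ e ∈ Finset.univ \ U, x e + ∑ e ∈ U, x e = ∑ e, x e :=
      Finset.sum_sdiff hUsub
    have hrest : 1 ≤ ∑ e ∈ Finset.univ \ U, x e := by omega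
    have hex : ∃ i ∈ Finset.univ \ U, 1 ≤ x i := by
      by_contra hno
      push_neg at hno
      have : ∑ e ∈ Finset.univ \ U, x e ≤ 0 :=
        Finset.sum_nonpos fun i hi => by have := hno i hi; omega
      omega
    obtain ⟨i, hiU, hxi⟩ := hex
    have hiU' : i ∉ U := (Finset.mem_sdiff.mp hiU).2
    -- the reduced point
    set x' : E → ℤ := x - Pi.single i 1 with hx'
    have hsingle : ∀ A : Finset E, ∑ e ∈ A, Pi.single (M := fun _ => ℤ) i 1 e =
        if i ∈ A then 1 else 0 := by
      intro A
      have : ∀ e, Pi.single (M := fun _ => ℤ) i 1 e = if e = i then 1 else 0 := by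
        intro e
        rw [Pi.single_apply]
      simp_rw [this]
      rw [Finset.sum_ite_eq' A i (fun _ => (1 : ℤ))]
    have hx'sum : ∀ A : Finset E, ∑ e ∈ A, x' e =
        ∑ e ∈ A, x e - (if i ∈ A then 1 else 0) := by
      intro A
      simp only [hx', Pi.sub_apply, Finset.sum_sub_distrib, hsingle A]
    have hA' : ∀ A : Finset E, l G A ≤ ∑ e ∈ A, x' e := by
      intro A
      rw [hx'sum]
      by_cases hiA : i ∈ A
      · rw [if_pos hiA]
        have hnt : ¬ Tight A := by
          intro ht
          have : A ∈ 𝒯 := Finset.mem_filter.mpr ⟨Finset.mem_univ A, ht⟩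
          have : A ⊆ U := by
            have := Finset.le_sup (f := id) this
            simpa using this
          exact hiU' (this hiA)
        simp only [hTight, not_le] at hnt
        have := hA A
        omega
      · rw [if_neg hiA, sub_zero]
        exact hA A
    have hsum' : ∑ e, x' e = l G Finset.univ := by
      rw [hx'sum, if_pos (Finset.mem_univ i), hsum1]
      ring
    obtain ⟨T, hTst, hTx⟩ := case_tight G hconn x' hA' hsum'
    refine Or.inr ⟨T, i, hTst, ?_⟩
    have : x - Pi.single i 1 = indZ Tᶜ := hTx
    rw [sub_eq_iff_eq_add] at this
    exact this
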